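/- With binary weights, the equilibrium distribution equals the decomposable distribution that is leximin-maximal over agents' utilities: among all decomposable distributions, it lexicographically maximizes the sorted vector of Leontief utilities (u_i(δ))_{i∈N}. -/

import Mathlib

open Finset

/-- The multiset of values of a finitely indexed vector, sorted in increasing order. -/
noncomputable def sortedVec {I : Type*} [Fintype I] (f : I → ℝ) : List ℝ :=
  Multiset.sort (Finset.univ.val.map f) (· ≤ ·)

lemma bridge_countP {I : Type*} [Fintype I] (f : I → ℝ) (p : ℝ → Prop) [DecidablePred p] :
    (univ.filter fun i => p (f i)).card = List.countP (fun y => decide (p y)) (sortedVec f) := by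
  have h1 : List.countP (fun y => decide (p y)) (sortedVec f)
      = Multiset.countP p (Finset.univ.val.map f) := by
    rw [← Multiset.coe_countP, sortedVec, Multiset.sort_eq]
  rw [h1, Multiset.countP_map]
  rfl

lemma sortedVec_length {I : Type*} [Fintype I] (f : I → ℝ) :
    (sortedVec f).length = Fintype.card I := by
  rw [sortedVec, Multiset.length_sort, Multiset.card_map]; rfl

lemma sortedVec_sorted {I : Type*} [Fintype I] (f : I → ℝ) : (sortedVec f).Pairwise (· ≤ ·) :=
  Multiset.pairwise_sort _ _

lemma mem_sortedVec {I : Type*} [Fintype I] {f : I → ℝ} {y : ℝ} (h : y ∈ sortedVec f) :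
    ∃ i, f i = y := by
  rw [sortedVec, Multiset.mem_sort, Multiset.mem_map] at h
  obtain ⟨i, _, hi⟩ := h
  exact ⟨i, hi⟩

lemma lex_total (l₁ l₂ : List ℝ) (h : l₁.length = l₂.length) :
    l₁ = l₂ ∨ List.Lex (· < ·) l₁ l₂ ∨ List.Lex (· < ·) l₂ l₁ := by
  induction l₁ generalizing l₂ with
  | nil => cases l₂ with
    | nil => left; rfl
    | cons b bs => simp at h
  | cons a as ih =>
    cases l₂ with
    | nil => simp at h
    | cons b bs =>
      rcases lt_trichotomy a b with hab | hab | hab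
      · right; left; exact List.Lex.rel hab
      · subst hab
        rcases ih bs (by simpa using h) with h1 | h1 | h1
        · left; rw [h1]
        · right; left; exact List.Lex.cons h1
        · right; right; exact List.Lex.cons h1
      · right; right; exact List.Lex.rel hab

lemma lex_decomp {l₁ l₂ : List ℝ} (h : List.Lex (· < ·) l₁ l₂) (hlen : l₁.length = l₂.length) :
    ∃ (p : List ℝ) (c t : ℝ) (q q' : List ℝ), l₁ = p ++ c :: q ∧ l₂ = p ++ t :: q' ∧ c < t := by
  induction h with
  | nil => simp at hlen
  | @cons a as bs h ih =>
    obtain ⟨p, c, t, q, q', h1, h2, h3⟩ := ih (by simpa using hlen)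
    exact ⟨a :: p, c, t, q, q', by rw [h1]; rfl, by rw [h2]; rfl, h3⟩
  | @rel a as b bs hab =>
    exact ⟨[], a, b, as, bs, rfl, rfl, hab⟩

theorem stmt_16 {N A : Type*} [Fintype N] [Fintype A] [DecidableEq A]
    (C : N → ℝ) (hC : ∀ i, 0 ≤ C i)
    (Ai : N → Finset A) (hAi : ∀ i, (Ai i).Nonempty)
    (δstar : A → ℝ) (hδs : ∀ x, 0 ≤ δstar x) (hsum : ∑ x, δstar x = ∑ i, C i)
    -- δstar is the equilibrium distribution:
    (heq : ∃ δi : N → A → ℝ, (∀ i x, 0 ≤ δi i x) ∧ (∀ x, ∑ i, δi i x = δstar x) ∧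
        (∀ i, ∑ x, δi i x = C i) ∧
        (∀ i x, x ∉ Ai i → δi i x = 0) ∧
        (∀ i x, δstar x ≠ (Ai i).inf' (hAi i) δstar → δi i x = 0)) :
    -- δstar is leximin-maximal over agents' utilities among decomposable distributions:
    ∀ δ : A → ℝ, (∀ x, 0 ≤ δ x) → (∑ x, δ x = ∑ i, C i) →
      (∃ δi : N → A → ℝ, (∀ i x, 0 ≤ δi i x) ∧ (∀ x, ∑ i, δi i x = δ x) ∧
          (∀ i, ∑ x, δi i x = C i) ∧ (∀ i x, x ∉ Ai i → δi i x = 0)) →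
      sortedVec (fun i => (Ai i).inf' (hAi i) δ) =
          sortedVec (fun i => (Ai i).inf' (hAi i) δstar) ∨
        List.Lex (· < ·) (sortedVec fun i => (Ai i).inf' (hAi i) δ)
          (sortedVec fun i => (Ai i).inf' (hAi i) δstar) := by
  classical
  intro δ hδ0 hδsum hdec
  obtain ⟨σ, hσ0, hσsum, hσC, hσsupp, hσcrit⟩ := heq
  obtain ⟨τ, hτ0, hτsum, hτC, hτsupp⟩ := hdec
  set u : N → ℝ := fun i => (Ai i).inf' (hAi i) δ with hu
  set ustar : N → ℝ := fun i => (Ai i).inf' (hAi i) δstar with hustar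
  rcases lex_total (sortedVec u) (sortedVec ustar)
      (by rw [sortedVec_length, sortedVec_length]) with h | h | h
  · exact Or.inl h
  · exact Or.inr h
  exfalso
  -- decompose the lex relation
  obtain ⟨p, s, b, q, q', hL1, hL2, hsb⟩ :=
    lex_decomp h (by rw [sortedVec_length, sortedVec_length])
  -- sortedness facts
  have hsort1 : (sortedVec ustar).Pairwise (· ≤ ·) := sortedVec_sorted _
  have hsort2 : (sortedVec u).Pairwise (· ≤ ·) := sortedVec_sorted _
  rw [hL1, List.pairwise_append] at hsort1
  rw [hL2, List.pairwise_append] at hsort2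
  have hq : ∀ y ∈ q, s ≤ y := (List.pairwise_cons.mp hsort1.2.1).1
  have hq' : ∀ y ∈ q', b ≤ y := (List.pairwise_cons.mp hsort2.2.1).1
  -- utility helpers
  have hule : ∀ i x, x ∈ Ai i → u i ≤ δ x := fun i x hx => Finset.inf'_le _ hx
  have husle : ∀ i x, x ∈ Ai i → ustar i ≤ δstar x := fun i x hx => Finset.inf'_le _ hx
  have hcx : ∀ i, ∃ x ∈ Ai i, δstar x = ustar i := by
    intro i
    obtain ⟨x, hx, he⟩ := Finset.exists_mem_eq_inf' (hAi i) δstar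
    exact ⟨x, hx, he.symm⟩
  -- counting facts
  have H1 : ∀ t : ℝ, t ≤ s →
      (univ.filter fun j => u j < t).card = (univ.filter fun j => ustar j < t).card := by
    intro t ht
    have b1 : (univ.filter fun j => u j < t).card
        = List.countP (fun y => decide (y < t)) (sortedVec u) :=
      bridge_countP u (fun y => y < t)
    have b2 : (univ.filter fun j => ustar j < t).card
        = List.countP (fun y => decide (y < t)) (sortedVec ustar) :=
      bridge_countP ustar (fun y => y < t)
    rw [b1, b2, hL1, hL2, List.countP_append, List.countP_append]
    have e1 : List.countP (fun y => decide (y < t)) (s :: q) = 0 := by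
      rw [List.countP_eq_zero]
      intro y hy
      rcases List.mem_cons.mp hy with rfl | hy'
      · simp only [decide_eq_true_eq]; exact not_lt.mpr ht
      · simp only [decide_eq_true_eq]; exact not_lt.mpr (ht.trans (hq y hy'))
    have e2 : List.countP (fun y => decide (y < t)) (b :: q') = 0 := by
      rw [List.countP_eq_zero]
      intro y hy
      rcases List.mem_cons.mp hy with rfl | hy'
      · simp only [decide_eq_true_eq]; exact not_lt.mpr (ht.trans hsb.le)
      · simp only [decide_eq_true_eq]; exact not_lt.mpr ((ht.trans hsb.le).trans (hq' y hy'))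
    rw [e1, e2]
  have H2 : (univ.filter fun j => u j ≤ s).card < (univ.filter fun j => ustar j ≤ s).card := by
    have b1 : (univ.filter fun j => u j ≤ s).card
        = List.countP (fun y => decide (y ≤ s)) (sortedVec u) :=
      bridge_countP u (fun y => y ≤ s)
    have b2 : (univ.filter fun j => ustar j ≤ s).card
        = List.countP (fun y => decide (y ≤ s)) (sortedVec ustar) :=
      bridge_countP ustar (fun y => y ≤ s)
    rw [b1, b2, hL1, hL2, List.countP_append, List.countP_append]
    have e2 : List.countP (fun y => decide (y ≤ s)) (b :: q') = 0 := by
      rw [List.countP_eq_zero]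
      intro y hy
      rcases List.mem_cons.mp hy with rfl | hy'
      · simp only [decide_eq_true_eq]; exact not_le.mpr hsb
      · simp only [decide_eq_true_eq]; exact not_le.mpr (hsb.trans_le (hq' y hy'))
    have e1 : 1 ≤ List.countP (fun y => decide (y ≤ s)) (s :: q) := by
      rw [List.countP_cons]
      simp
    rw [e2]
    omega
  have H3 : ∃ i, ustar i = s := by
    apply mem_sortedVec
    rw [hL1]
    exact List.mem_append_right _ List.mem_cons_self
  -- money conservation lemma
  have money : ∀ v : ℝ,
      ∑ x ∈ univ.filter (fun x => ∃ i, ustar i ≤ v ∧ x ∈ Ai i ∧ δstar x = ustar i), δ x ≤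
      ∑ x ∈ univ.filter (fun x => ∃ i, ustar i ≤ v ∧ x ∈ Ai i ∧ δstar x = ustar i), δstar x := by
    intro v
    set T := univ.filter (fun x => ∃ i, ustar i ≤ v ∧ x ∈ Ai i ∧ δstar x = ustar i) with hT
    set U := univ.filter (fun i => ustar i ≤ v) with hU
    have hnotinA : ∀ i, i ∉ U → ∀ x ∈ T, x ∉ Ai i := by
      intro i hiU x hxT hxA
      obtain ⟨j, hjv, _, hje⟩ := (mem_filter.mp hxT).2
      exact hiU (mem_filter.mpr ⟨mem_univ i, ((husle i x hxA).trans_eq hje).trans hjv⟩)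
    have hτbound : ∑ x ∈ T, δ x ≤ ∑ i ∈ U, C i := by
      have e1 : ∑ x ∈ T, δ x = ∑ i, ∑ x ∈ T, τ i x := by
        rw [Finset.sum_comm]
        exact Finset.sum_congr rfl fun x _ => (hτsum x).symm
      have e2 : ∑ i, ∑ x ∈ T, τ i x = ∑ i ∈ U, ∑ x ∈ T, τ i x := by
        symm
        apply Finset.sum_subset (subset_univ U)
        intro i _ hiU
        exact Finset.sum_eq_zero fun x hxT => hτsupp i x (hnotinA i hiU x hxT)
      rw [e1, e2]
      apply Finset.sum_le_sum
      intro i _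
      calc ∑ x ∈ T, τ i x ≤ ∑ x, τ i x :=
            Finset.sum_le_sum_of_subset_of_nonneg (subset_univ T) fun x _ _ => hτ0 i x
        _ = C i := hτC i
    have hσbound : ∑ i ∈ U, C i ≤ ∑ x ∈ T, δstar x := by
      have e1 : ∑ x ∈ T, δstar x = ∑ i, ∑ x ∈ T, σ i x := by
        rw [Finset.sum_comm]
        exact Finset.sum_congr rfl fun x _ => (hσsum x).symm
      have e3 : ∀ i ∈ U, ∑ x ∈ T, σ i x = C i := by
        intro i hiU
        rw [← hσC i]
        apply Finset.sum_subset (subset_univ T)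
        intro x _ hxT
        by_cases hxA : x ∈ Ai i
        · by_cases hce : δstar x = ustar i
          · exact absurd (mem_filter.mpr ⟨mem_univ x,
              ⟨i, (mem_filter.mp hiU).2, hxA, hce⟩⟩) hxT
          · exact hσcrit i x hce
        · exact hσsupp i x hxA
      rw [e1]
      calc ∑ i ∈ U, C i = ∑ i ∈ U, ∑ x ∈ T, σ i x :=
            Finset.sum_congr rfl fun i hi => (e3 i hi).symm
        _ ≤ ∑ i, ∑ x ∈ T, σ i x :=
            Finset.sum_le_sum_of_subset_of_nonneg (subset_univ U)
              (fun i _ _ => Finset.sum_nonneg fun x _ => hσ0 i x)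
    exact hτbound.trans hσbound
  -- lower bound on utilities at level w
  have clow : ∀ w : ℝ, w ≤ s → (∀ j, ustar j < w → u j = ustar j) →
      ∀ i, ustar i = w → w ≤ u i := by
    intro w hw P1 i hiw
    by_contra hlt
    push_neg at hlt
    have hsubset : insert i (univ.filter fun j => ustar j < w) ⊆
        (univ.filter fun j => u j < w) := by
      apply Finset.insert_subset (mem_filter.mpr ⟨mem_univ i, hlt⟩)
      intro j hj
      have hj' := (mem_filter.mp hj).2
      exact mem_filter.mpr ⟨mem_univ j, (P1 j hj') ▸ hj'⟩
    have hnotmem : i ∉ (univ.filter fun j => ustar j < w) := by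
      simp only [mem_filter]
      rintro ⟨-, hc⟩
      rw [hiw] at hc
      exact lt_irrefl _ hc
    have hcard := Finset.card_le_card hsubset
    rw [Finset.card_insert_of_notMem hnotmem, H1 w hw] at hcard
    omega
  -- level lemma: distribution equality extends to level w
  have level : ∀ w : ℝ, w ≤ s → (∀ j, ustar j < w → u j = ustar j) →
      (∀ x, (∃ i, ustar i < w ∧ x ∈ Ai i ∧ δstar x = ustar i) → δ x = δstar x) →
      ∀ x, (∃ i, ustar i ≤ w ∧ x ∈ Ai i ∧ δstar x = ustar i) → δ x = δstar x := by
    intro w hw P1 P2 x hx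
    set Tle := univ.filter (fun x => ∃ i, ustar i ≤ w ∧ x ∈ Ai i ∧ δstar x = ustar i) with hTle
    set Tlt := univ.filter (fun x => ∃ i, ustar i < w ∧ x ∈ Ai i ∧ δstar x = ustar i) with hTlt
    have hsub : Tlt ⊆ Tle := by
      intro y hy
      obtain ⟨i, hi, hA, he⟩ := (mem_filter.mp hy).2
      exact mem_filter.mpr ⟨mem_univ y, ⟨i, hi.le, hA, he⟩⟩
    have hE : ∀ y ∈ Tle \ Tlt, δstar y = w := by
      intro y hy
      rw [Finset.mem_sdiff] at hy
      obtain ⟨i, hi, hA, he⟩ := (mem_filter.mp hy.1).2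
      rcases lt_or_eq_of_le hi with hlt | heq'
      · exact absurd (mem_filter.mpr ⟨mem_univ y, ⟨i, hlt, hA, he⟩⟩) hy.2
      · rw [he, heq']
    have hgeq : ∀ y ∈ Tle \ Tlt, w ≤ δ y := by
      intro y hy
      have hy1 := hy
      rw [Finset.mem_sdiff] at hy1
      obtain ⟨i, hi, hA, he⟩ := (mem_filter.mp hy1.1).2
      have hiw : ustar i = w := by rw [← he, hE y hy]
      exact (clow w hw P1 i hiw).trans (hule i y hA)
    have hsum1 : ∑ y ∈ Tlt, δ y = ∑ y ∈ Tlt, δstar y :=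
      Finset.sum_congr rfl fun y hy => P2 y (mem_filter.mp hy).2
    have hsum2 : ∑ y ∈ Tle \ Tlt, δ y ≤ ∑ y ∈ Tle \ Tlt, δstar y := by
      have hm := money w
      rw [← Finset.sum_sdiff hsub (f := δ), ← Finset.sum_sdiff hsub (f := δstar)] at hm
      linarith
    have hzero : ∀ y ∈ Tle \ Tlt, δ y - δstar y = 0 := by
      have hnn : ∀ y ∈ Tle \ Tlt, 0 ≤ δ y - δstar y := by
        intro y hy
        have := hgeq y hy
        have := hE y hy
        linarith
      have hsle : ∑ y ∈ Tle \ Tlt, (δ y - δstar y) = 0 := by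
        have h1 : ∑ y ∈ Tle \ Tlt, (δ y - δstar y) ≤ 0 := by
          rw [Finset.sum_sub_distrib]
          linarith
        have h2 : 0 ≤ ∑ y ∈ Tle \ Tlt, (δ y - δstar y) := Finset.sum_nonneg hnn
        linarith
      exact (Finset.sum_eq_zero_iff_of_nonneg hnn).mp hsle
    have hxTle : x ∈ Tle := mem_filter.mpr ⟨mem_univ x, hx⟩
    by_cases hxTlt : x ∈ Tlt
    · exact P2 x (mem_filter.mp hxTlt).2
    · have := hzero x (Finset.mem_sdiff.mpr ⟨hxTle, hxTlt⟩)
      linarith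
  -- the induction over levels
  have main : ∀ n : ℕ, ∀ v : ℝ, v ≤ s → (univ.filter fun j => ustar j < v).card ≤ n →
      (∀ j, ustar j < v → u j = ustar j) ∧
      (∀ x, (∃ i, ustar i < v ∧ x ∈ Ai i ∧ δstar x = ustar i) → δ x = δstar x) := by
    intro n
    induction n with
    | zero =>
      intro v hv hcard
      have hempty : ∀ j, ¬ ustar j < v := by
        intro j hj
        have : j ∈ univ.filter fun j => ustar j < v := mem_filter.mpr ⟨mem_univ j, hj⟩
        have := Finset.card_pos.mpr ⟨j, this⟩
        omega
      exact ⟨fun j hj => absurd hj (hempty j),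
        fun x ⟨i, hi, _, _⟩ => absurd hi (hempty i)⟩
    | succ n ih =>
      intro v hv hcard
      by_cases hne : (univ.filter fun j => ustar j < v).Nonempty
      · obtain ⟨i₀, hi₀mem, hi₀max⟩ := Finset.exists_max_image _ ustar hne
        have hwv : ustar i₀ < v := (mem_filter.mp hi₀mem).2
        have hws : ustar i₀ ≤ s := le_of_lt (lt_of_lt_of_le hwv hv)
        have hsubset : (univ.filter fun j => ustar j < ustar i₀) ⊆
            (univ.filter fun j => ustar j < v).erase i₀ := by
          intro j hj
          have hj' := (mem_filter.mp hj).2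
          refine Finset.mem_erase.mpr ⟨?_, mem_filter.mpr ⟨mem_univ j, hj'.trans hwv⟩⟩
          intro hji
          rw [hji] at hj'
          exact lt_irrefl _ hj'
        have hcard' : (univ.filter fun j => ustar j < ustar i₀).card ≤ n := by
          have h1 := Finset.card_le_card hsubset
          have h2 := Finset.card_erase_of_mem hi₀mem
          have h3 := Finset.card_pos.mpr ⟨i₀, hi₀mem⟩
          omega
        obtain ⟨P1, P2⟩ := ih (ustar i₀) hws hcard'
        have hlev := level (ustar i₀) hws P1 P2
        constructor
        · intro j hj
          have hjw : ustar j ≤ ustar i₀ := hi₀max j (mem_filter.mpr ⟨mem_univ j, hj⟩)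
          rcases lt_or_eq_of_le hjw with hlt | heq'
          · exact P1 j hlt
          · obtain ⟨x, hxA, hxe⟩ := hcx j
            have hδx : δ x = δstar x := hlev x ⟨j, hjw, hxA, hxe⟩
            have h1 : u j ≤ ustar j := by
              calc u j ≤ δ x := hule j x hxA
                _ = δstar x := hδx
                _ = ustar j := hxe
            have h2 : ustar i₀ ≤ u j := clow (ustar i₀) hws P1 j heq'
            rw [← heq'] at h2
            exact le_antisymm h1 h2
        · intro x ⟨i, hiv, hxA, hxe⟩
          exact hlev x ⟨i, hi₀max i (mem_filter.mpr ⟨mem_univ i, hiv⟩), hxA, hxe⟩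
      · rw [Finset.not_nonempty_iff_eq_empty] at hne
        have hempty : ∀ j, ¬ ustar j < v := by
          intro j hj
          have : j ∈ univ.filter fun j => ustar j < v := mem_filter.mpr ⟨mem_univ j, hj⟩
          rw [hne] at this
          exact absurd this (Finset.notMem_empty j)
        exact ⟨fun j hj => absurd hj (hempty j),
          fun x ⟨i, hi, _, _⟩ => absurd hi (hempty i)⟩
  -- apply at level s
  obtain ⟨P1, P2⟩ := main (univ.filter fun j => ustar j < s).card s le_rfl le_rfl
  have hlev := level s le_rfl P1 P2
  -- find an agent at level s whose utility differs
  have hexists : ∃ i, ustar i = s ∧ u i ≠ s := by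
    by_contra hc
    push_neg at hc
    have hsubset : (univ.filter fun j => ustar j ≤ s) ⊆ (univ.filter fun j => u j ≤ s) := by
      intro j hj
      have hj' := (mem_filter.mp hj).2
      rcases lt_or_eq_of_le hj' with hlt | heq'
      · exact mem_filter.mpr ⟨mem_univ j, (P1 j hlt).le.trans hj'⟩
      · exact mem_filter.mpr ⟨mem_univ j, (hc j heq').le⟩
    exact absurd (Finset.card_le_card hsubset) (not_le.mpr H2)
  obtain ⟨i₁, hi₁s, hi₁ne⟩ := hexists
  obtain ⟨x, hxA, hxe⟩ := hcx i₁
  have hδx : δ x = δstar x := hlev x ⟨i₁, hi₁s.le, hxA, hxe⟩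
  have h1 : u i₁ ≤ s := by
    calc u i₁ ≤ δ x := hule i₁ x hxA
      _ = δstar x := hδx
      _ = ustar i₁ := hxe
      _ = s := hi₁s
  have h2 : s ≤ u i₁ := clow s le_rfl P1 i₁ hi₁s
  exact hi₁ne (le_antisymm h1 h2)
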